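/- Let A ∈ ℝ^{n×n}, B ∈ ℝ^{n×s}, 𝒱 ∈ ℝ^{n×q} with 𝒱ᵀ𝒱 = I_q, 𝒯 = 𝒱ᵀ A 𝒱 and B_m = 𝒱ᵀ B. For t ≥ t₀ define X(t) = ∫_{t₀}^t Z(τ) Z(τ)ᵀ dτ with Z(τ) = e^{(t−τ)A} B, and X_m(t) = ∫_{t₀}^t Z_m(τ) Z_m(τ)ᵀ dτ with Z_m(τ) = 𝒱 e^{(t−τ)𝒯} B_m. Then for all t ∈ [t₀,T_f]: ‖X(t) − X_m(t)‖ ≤ e^{t·μ₂(A)} ( ‖B‖ + ‖B_m‖ ) ∫_{t₀}^t e^{−τ·μ₂(A)} ‖ e^{(t−τ)A} B − 𝒱 e^{(t−τ)𝒯} B_m ‖ dτ. -/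

import Mathlib

open Matrix Set intervalIntegral
open scoped Matrix.Norms.L2Operator RealInnerProductSpace

/-- The 2-logarithmic norm `μ₂(M) = (1/2)·λ_max(M + Mᵀ)` of a real square matrix: half the
largest eigenvalue of the symmetric matrix `M + Mᵀ`. -/
noncomputable def mu2 {k : ℕ} (M : Matrix (Fin k) (Fin k) ℝ) : ℝ :=
  (1 / 2) * ⨆ i, (show (M + Mᵀ).IsHermitian by
    simpa [Matrix.conjTranspose_eq_transpose_of_trivial] using
      Matrix.isHermitian_add_transpose_self M).eigenvalues i

lemma mu2_eq {k : ℕ} (M : Matrix (Fin k) (Fin k) ℝ) (h : (M + Mᵀ).IsHermitian) :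
    mu2 M = (1 / 2) * ⨆ i, h.eigenvalues i := rfl

lemma rayleigh_le {k : ℕ} [Nonempty (Fin k)] {S : Matrix (Fin k) (Fin k) ℝ}
    (hS : S.IsHermitian) (x : Fin k → ℝ) :
    x ⬝ᵥ (S *ᵥ x) ≤ (⨆ i, hS.eigenvalues i) * (x ⬝ᵥ x) := by
  classical
  set lam := ⨆ i, hS.eigenvalues i with hlam
  have hev : ∀ i, hS.eigenvalues i ≤ lam := fun i =>
    le_ciSup (Set.Finite.bddAbove (Set.finite_range _)) i
  set U : Matrix (Fin k) (Fin k) ℝ := (hS.eigenvectorUnitary : Matrix (Fin k) (Fin k) ℝ) with hUdef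
  have hUU : U * Uᵀ = 1 := by
    have := (Unitary.mem_iff.mp hS.eigenvectorUnitary.2).2
    simpa [hUdef, Matrix.star_eq_conjTranspose,
      Matrix.conjTranspose_eq_transpose_of_trivial] using this
  have hspec : S = U * Matrix.diagonal (RCLike.ofReal ∘ hS.eigenvalues) * Uᵀ := by
    have := hS.spectral_theorem
    simpa [hUdef, Matrix.star_eq_conjTranspose,
      Matrix.conjTranspose_eq_transpose_of_trivial] using this
  set y : Fin k → ℝ := Uᵀ *ᵥ x with hy
  have key : x ⬝ᵥ (S *ᵥ x) = y ⬝ᵥ (Matrix.diagonal (RCLike.ofReal ∘ hS.eigenvalues) *ᵥ y) := by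
    conv_lhs => rw [hspec]
    rw [← Matrix.mulVec_mulVec, ← Matrix.mulVec_mulVec, Matrix.dotProduct_mulVec x U,
      ← Matrix.mulVec_transpose, hy]
  have hyy : y ⬝ᵥ y = x ⬝ᵥ x := by
    rw [hy, Matrix.dotProduct_mulVec (Uᵀ *ᵥ x) Uᵀ, Matrix.vecMul_transpose,
      Matrix.mulVec_mulVec, hUU, Matrix.one_mulVec]
  rw [key, ← hyy]
  have : y ⬝ᵥ (Matrix.diagonal (RCLike.ofReal ∘ hS.eigenvalues) *ᵥ y)
      = ∑ i, hS.eigenvalues i * (y i * y i) := by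
    simp only [dotProduct, Matrix.mulVec_diagonal, Function.comp_apply,
      RCLike.ofReal_real_eq_id, id_eq]
    exact Finset.sum_congr rfl fun i _ => by ring
  rw [this, dotProduct, Finset.mul_sum]
  exact Finset.sum_le_sum fun i _ =>
    mul_le_mul_of_nonneg_right (hev i) (mul_self_nonneg _)

lemma exp_l2_opNorm_le {k : ℕ} [Nonempty (Fin k)] (M : Matrix (Fin k) (Fin k) ℝ)
    {s : ℝ} (hs : 0 ≤ s) :
    ‖NormedSpace.exp (s • M)‖ ≤ Real.exp (s * mu2 M) := by
  classical
  have hSherm : (M + Mᵀ).IsHermitian := by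
    simpa [Matrix.conjTranspose_eq_transpose_of_trivial] using
      Matrix.isHermitian_add_transpose_self M
  have hmu : mu2 M = (1 / 2) * ⨆ i, hSherm.eigenvalues i := mu2_eq M hSherm
  have hlam : (⨆ i, hSherm.eigenvalues i) = 2 * mu2 M := by rw [hmu]; ring
  rw [Matrix.l2_opNorm_def]
  refine ContinuousLinearMap.opNorm_le_bound _ (Real.exp_nonneg _) fun x => ?_
  set xv : Fin k → ℝ := WithLp.equiv 2 _ x with hxv
  set f : ℝ → EuclideanSpace ℝ (Fin k) :=
    fun τ => (WithLp.equiv 2 (Fin k → ℝ)).symm ((NormedSpace.exp (τ • M)) *ᵥ xv) with hf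
  let L : Matrix (Fin k) (Fin k) ℝ →ₗ[ℝ] EuclideanSpace ℝ (Fin k) :=
    { toFun := fun P => (WithLp.equiv 2 (Fin k → ℝ)).symm (P *ᵥ xv)
      map_add' := fun P Q => by
        simp [Matrix.add_mulVec]
      map_smul' := fun c P => by
        simp [Matrix.smul_mulVec] }
  have hfderiv : ∀ τ, HasDerivAt f (L (M * NormedSpace.exp (τ • M))) τ := by
    intro τ
    have h1 := hasDerivAt_exp_smul_const' (𝕂 := ℝ) M τ
    have h2 := L.toContinuousLinearMap.hasFDerivAt.comp_hasDerivAt τ h1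
    exact h2
  set g : ℝ → ℝ := fun τ => ⟪f τ, f τ⟫ with hg
  have hgderiv : ∀ τ, HasDerivAt g
      (⟪f τ, L (M * NormedSpace.exp (τ • M))⟫ +
        ⟪L (M * NormedSpace.exp (τ • M)), f τ⟫) τ :=
    fun τ => HasDerivAt.inner ℝ (hfderiv τ) (hfderiv τ)
  have hinner_dot : ∀ a b : Fin k → ℝ,
      ⟪(WithLp.equiv 2 (Fin k → ℝ)).symm a, (WithLp.equiv 2 (Fin k → ℝ)).symm b⟫ = a ⬝ᵥ b := by
    intro a b
    simp [PiLp.inner_apply, dotProduct, mul_comm]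
  have hkey : ∀ τ,
      ⟪f τ, L (M * NormedSpace.exp (τ • M))⟫ +
        ⟪L (M * NormedSpace.exp (τ • M)), f τ⟫ ≤ (2 * mu2 M) * g τ := by
    intro τ
    set y : Fin k → ℝ := (NormedSpace.exp (τ • M)) *ᵥ xv with hy
    have hMy : (M * NormedSpace.exp (τ • M)) *ᵥ xv = M *ᵥ y := by
      rw [← Matrix.mulVec_mulVec]
    have h1 : ⟪f τ, L (M * NormedSpace.exp (τ • M))⟫ = y ⬝ᵥ (M *ᵥ y) := by
      show ⟪(WithLp.equiv 2 (Fin k → ℝ)).symm y,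
        (WithLp.equiv 2 (Fin k → ℝ)).symm ((M * NormedSpace.exp (τ • M)) *ᵥ xv)⟫ = _
      rw [hinner_dot, hMy]
    have h2 : ⟪L (M * NormedSpace.exp (τ • M)), f τ⟫ = (M *ᵥ y) ⬝ᵥ y := by
      show ⟪(WithLp.equiv 2 (Fin k → ℝ)).symm ((M * NormedSpace.exp (τ • M)) *ᵥ xv),
        (WithLp.equiv 2 (Fin k → ℝ)).symm y⟫ = _
      rw [hinner_dot, hMy]
    have h3 : g τ = y ⬝ᵥ y := by
      show ⟪(WithLp.equiv 2 (Fin k → ℝ)).symm y, (WithLp.equiv 2 (Fin k → ℝ)).symm y⟫ = _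
      rw [hinner_dot]
    have htr : (M *ᵥ y) ⬝ᵥ y = y ⬝ᵥ (Mᵀ *ᵥ y) := by
      rw [Matrix.dotProduct_mulVec y Mᵀ, Matrix.vecMul_transpose]
    have hsum : y ⬝ᵥ (M *ᵥ y) + (M *ᵥ y) ⬝ᵥ y = y ⬝ᵥ ((M + Mᵀ) *ᵥ y) := by
      rw [Matrix.add_mulVec, dotProduct_add, htr]
    rw [h1, h2, h3, hsum, ← hlam]
    exact rayleigh_le hSherm y
  set c : ℝ := 2 * mu2 M with hc
  set h : ℝ → ℝ := fun τ => g τ * Real.exp (-c * τ) with hh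
  have hhderiv : ∀ τ, HasDerivAt h
      ((⟪f τ, L (M * NormedSpace.exp (τ • M))⟫ +
        ⟪L (M * NormedSpace.exp (τ • M)), f τ⟫) * Real.exp (-c * τ) +
        g τ * (Real.exp (-c * τ) * -c)) τ := by
    intro τ
    have he : HasDerivAt (fun τ : ℝ => Real.exp (-c * τ)) (Real.exp (-c * τ) * -c) τ := by
      have h1 : HasDerivAt (fun τ : ℝ => -c * τ) (-c) τ := by
        simpa using (hasDerivAt_id τ).const_mul (-c)
      simpa [Function.comp_def] using (Real.hasDerivAt_exp (-c * τ)).comp τ h1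
    exact (hgderiv τ).mul he
  have hanti : AntitoneOn h (Icc 0 s) := by
    apply antitoneOn_of_deriv_nonpos (convex_Icc 0 s)
    · exact fun τ _ => ((hhderiv τ).continuousAt).continuousWithinAt
    · exact fun τ _ => (hhderiv τ).differentiableAt.differentiableWithinAt
    · intro τ _
      rw [(hhderiv τ).deriv]
      have hbound := hkey τ
      have hgpos : 0 ≤ g τ := real_inner_self_nonneg
      have hepos : 0 < Real.exp (-c * τ) := Real.exp_pos _
      nlinarith [mul_le_mul_of_nonneg_right hbound hepos.le]
  have hends := hanti (left_mem_Icc.mpr hs) (right_mem_Icc.mpr hs) hs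
  have hh0 : h 0 = ‖x‖ * ‖x‖ := by
    have hf0 : f 0 = x := by
      simp [hf, hxv]
    have hg0 : g 0 = ‖x‖ * ‖x‖ := by
      rw [hg]; simp only [hf0]; exact real_inner_self_eq_norm_mul_norm x
    simp [hh, hg0]
  have hgs : g s = ‖f s‖ * ‖f s‖ := by
    rw [hg]; exact real_inner_self_eq_norm_mul_norm (f s)
  -- conclude ‖f s‖ ≤ exp (s * mu2 M) * ‖x‖
  have hfinal : ‖f s‖ ≤ Real.exp (s * mu2 M) * ‖x‖ := by
    have h1 : g s * Real.exp (-c * s) ≤ ‖x‖ * ‖x‖ := by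
      rw [← hh0]; exact hends
    have h2 : g s ≤ Real.exp (c * s) * (‖x‖ * ‖x‖) := by
      have h3 : Real.exp (-c * s) * Real.exp (c * s) = 1 := by
        rw [← Real.exp_add]; norm_num
      have hgs0 : (0:ℝ) ≤ g s := by rw [hg]; exact real_inner_self_nonneg
      nlinarith [Real.exp_pos (c * s), Real.exp_pos (-c * s)]
    have hcs : Real.exp (c * s) = Real.exp (s * mu2 M) * Real.exp (s * mu2 M) := by
      rw [← Real.exp_add, hc]; ring_nf
    rw [hgs, hcs] at h2
    nlinarith [norm_nonneg (f s), norm_nonneg x, Real.exp_pos (s * mu2 M),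
      mul_nonneg (Real.exp_nonneg (s * mu2 M)) (norm_nonneg x)]
  have happ : (Matrix.toEuclideanLin.trans LinearMap.toContinuousLinearMap)
      (NormedSpace.exp (s • M)) x = f s := by
    simp [hf, hxv, LinearEquiv.trans_apply, Matrix.toEuclideanLin_apply]
  rw [happ]
  exact hfinal

lemma mu2_conj_le {n q : ℕ} [Nonempty (Fin n)] [Nonempty (Fin q)]
    (A : Matrix (Fin n) (Fin n) ℝ) (V : Matrix (Fin n) (Fin q) ℝ) (hV : Vᵀ * V = 1) :
    mu2 (Vᵀ * A * V) ≤ mu2 A := by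
  classical
  have hSA : (A + Aᵀ).IsHermitian := by
    simpa [Matrix.conjTranspose_eq_transpose_of_trivial] using
      Matrix.isHermitian_add_transpose_self A
  set T := Vᵀ * A * V with hT
  have hST : (T + Tᵀ).IsHermitian := by
    simpa [Matrix.conjTranspose_eq_transpose_of_trivial] using
      Matrix.isHermitian_add_transpose_self T
  rw [mu2_eq _ hST, mu2_eq _ hSA]
  have hTt : Tᵀ = Vᵀ * Aᵀ * V := by
    rw [hT, Matrix.transpose_mul, Matrix.transpose_mul, Matrix.transpose_transpose,
      ← Matrix.mul_assoc]
  have hconj : T + Tᵀ = Vᵀ * (A + Aᵀ) * V := by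
    rw [hTt, hT, Matrix.mul_add, Matrix.add_mul]
  have hle : ∀ i, hST.eigenvalues i ≤ ⨆ j, hSA.eigenvalues j := by
    intro i
    set v : Fin q → ℝ := ⇑(hST.eigenvectorBasis i) with hv
    have h0' : hST.eigenvalues i = v ⬝ᵥ ((T + Tᵀ) *ᵥ v) := by
      simpa [hv] using hST.eigenvalues_eq i
    have hw : hST.eigenvalues i = (V *ᵥ v) ⬝ᵥ ((A + Aᵀ) *ᵥ (V *ᵥ v)) := by
      rw [h0', hconj, ← Matrix.mulVec_mulVec, ← Matrix.mulVec_mulVec,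
        Matrix.dotProduct_mulVec v Vᵀ, Matrix.vecMul_transpose]
    have hvv1 : (V *ᵥ v) ⬝ᵥ (V *ᵥ v) = v ⬝ᵥ v := by
      rw [Matrix.dotProduct_mulVec (V *ᵥ v) V, ← Matrix.mulVec_transpose,
        Matrix.mulVec_mulVec, hV, Matrix.one_mulVec, dotProduct_comm]
    have hvv : (V *ᵥ v) ⬝ᵥ (V *ᵥ v) = 1 := by
      have hnorm : ‖hST.eigenvectorBasis i‖ = 1 := hST.eigenvectorBasis.orthonormal.1 i
      have h3 : v ⬝ᵥ v = ⟪hST.eigenvectorBasis i, hST.eigenvectorBasis i⟫ := by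
        simp only [hv, EuclideanSpace.inner_eq_star_dotProduct, star_trivial]
      rw [hvv1, h3, real_inner_self_eq_norm_mul_norm, hnorm]; norm_num
    calc hST.eigenvalues i = (V *ᵥ v) ⬝ᵥ ((A + Aᵀ) *ᵥ (V *ᵥ v)) := hw
      _ ≤ (⨆ j, hSA.eigenvalues j) * ((V *ᵥ v) ⬝ᵥ (V *ᵥ v)) := rayleigh_le hSA _
      _ = ⨆ j, hSA.eigenvalues j := by rw [hvv, mul_one]
  have hsup : (⨆ i, hST.eigenvalues i) ≤ ⨆ j, hSA.eigenvalues j := ciSup_le hle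
  have h12 : (0:ℝ) ≤ 1/2 := by norm_num
  exact mul_le_mul_of_nonneg_left hsup h12

lemma l2_opNorm_V_mul {n q s : ℕ} (V : Matrix (Fin n) (Fin q) ℝ) (hV : Vᵀ * V = 1)
    (P : Matrix (Fin q) (Fin s) ℝ) : ‖V * P‖ = ‖P‖ := by
  have h1 : ‖(V * P)ᴴ * (V * P)‖ = ‖V * P‖ * ‖V * P‖ :=
    Matrix.l2_opNorm_conjTranspose_mul_self _
  have h3 : (V * P)ᴴ * (V * P) = Pᴴ * P := by
    simp only [Matrix.conjTranspose_eq_transpose_of_trivial]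
    rw [Matrix.transpose_mul, Matrix.mul_assoc, ← Matrix.mul_assoc Vᵀ V P, hV, Matrix.one_mul]
  rw [h3, Matrix.l2_opNorm_conjTranspose_mul_self] at h1
  exact ((mul_self_inj (norm_nonneg _) (norm_nonneg _)).mp h1.symm)

lemma l2_mul_isBoundedBilinear {a b c : ℕ} :
    IsBoundedBilinearMap ℝ
      (fun p : Matrix (Fin a) (Fin b) ℝ × Matrix (Fin b) (Fin c) ℝ => p.1 * p.2) where
  add_left := fun x₁ x₂ y => Matrix.add_mul x₁ x₂ y
  smul_left := fun c x y => Matrix.smul_mul c x y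
  add_right := fun x y₁ y₂ => Matrix.mul_add x y₁ y₂
  smul_right := fun c x y => Matrix.mul_smul x c y
  bound := ⟨1, one_pos, fun x y => by simpa using Matrix.l2_opNorm_mul x y⟩

lemma l2_opNorm_transpose {a b : ℕ} (P : Matrix (Fin a) (Fin b) ℝ) : ‖Pᵀ‖ = ‖P‖ := by
  rw [← Matrix.conjTranspose_eq_transpose_of_trivial]
  exact Matrix.l2_opNorm_conjTranspose P

/-- With `X(t) = ∫_{t₀}^t Z(τ)Z(τ)ᵀ dτ`, `Z(τ) = e^{(t−τ)A}B`, and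
`X_m(t) = ∫_{t₀}^t Z_m(τ)Z_m(τ)ᵀ dτ`, `Z_m(τ) = 𝒱 e^{(t−τ)𝒯} B_m`, `𝒯 = 𝒱ᵀA𝒱`, `B_m = 𝒱ᵀB`,
`𝒱ᵀ𝒱 = I`, one has, for `t ∈ [t₀,T_f]`,
`‖X(t) − X_m(t)‖ ≤ e^{tμ₂(A)}(‖B‖+‖B_m‖) ∫_{t₀}^t e^{−τμ₂(A)} ‖e^{(t−τ)A}B − 𝒱e^{(t−τ)𝒯}B_m‖ dτ`
(spectral norms). -/
theorem error_bound_general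
    (n s q : ℕ) (hn : 0 < n) (hs : 0 < s) (hq : 0 < q)
    (t₀ Tf : ℝ) (ht : t₀ ≤ Tf)
    (A : Matrix (Fin n) (Fin n) ℝ) (B : Matrix (Fin n) (Fin s) ℝ)
    (V : Matrix (Fin n) (Fin q) ℝ) (hV : Vᵀ * V = 1)
    (T : Matrix (Fin q) (Fin q) ℝ) (hT : T = Vᵀ * A * V)
    (Bm : Matrix (Fin q) (Fin s) ℝ) (hBm : Bm = Vᵀ * B)
    (X Xm : ℝ → Matrix (Fin n) (Fin n) ℝ)
    (hX : ∀ t, X t =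
      ∫ τ in t₀..t,
        (NormedSpace.exp ((t - τ) • A) * B) * (NormedSpace.exp ((t - τ) • A) * B)ᵀ)
    (hXm : ∀ t, Xm t =
      ∫ τ in t₀..t,
        (V * NormedSpace.exp ((t - τ) • T) * Bm) *
          (V * NormedSpace.exp ((t - τ) • T) * Bm)ᵀ) :
    ∀ t ∈ Icc t₀ Tf,
      ‖X t - Xm t‖ ≤
        Real.exp (t * mu2 A) * (‖B‖ + ‖Bm‖) *
          ∫ τ in t₀..t,
            Real.exp (-τ * mu2 A) *
              ‖NormedSpace.exp ((t - τ) • A) * B -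
                V * NormedSpace.exp ((t - τ) • T) * Bm‖ := by
  haveI : Nonempty (Fin n) := Fin.pos_iff_nonempty.mp hn
  haveI : Nonempty (Fin q) := Fin.pos_iff_nonempty.mp hq
  rintro t ⟨ht0, htf⟩
  set μ := mu2 A with hμ
  set Z : ℝ → Matrix (Fin n) (Fin s) ℝ :=
    fun τ => NormedSpace.exp ((t - τ) • A) * B with hZdef
  set Zm : ℝ → Matrix (Fin n) (Fin s) ℝ :=
    fun τ => V * NormedSpace.exp ((t - τ) • T) * Bm with hZmdef
  have hZeq : ∀ τ : ℝ, NormedSpace.exp ((t - τ) • A) * B = Z τ := fun _ => rfl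
  have hZmeq : ∀ τ : ℝ, V * NormedSpace.exp ((t - τ) • T) * Bm = Zm τ := fun _ => rfl
  -- continuity facts
  have hcA : Continuous fun τ : ℝ => NormedSpace.exp ((t - τ) • A) :=
    (continuous_iff_continuousAt.2 fun u =>
      (hasDerivAt_exp_smul_const' (𝕂 := ℝ) A u).continuousAt).comp
      (continuous_const.sub continuous_id)
  have hcT : Continuous fun τ : ℝ => NormedSpace.exp ((t - τ) • T) :=
    (continuous_iff_continuousAt.2 fun u =>
      (hasDerivAt_exp_smul_const' (𝕂 := ℝ) T u).continuousAt).comp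
      (continuous_const.sub continuous_id)
  have hZc : Continuous Z :=
    (l2_mul_isBoundedBilinear (a := n) (b := n) (c := s)).continuous.comp
      (hcA.prodMk continuous_const)
  have hZmc : Continuous Zm := by
    have h1 : Continuous fun τ : ℝ => V * NormedSpace.exp ((t - τ) • T) :=
      (l2_mul_isBoundedBilinear (a := n) (b := q) (c := q)).continuous.comp
        (continuous_const.prodMk hcT)
    exact (l2_mul_isBoundedBilinear (a := n) (b := q) (c := s)).continuous.comp
      (h1.prodMk continuous_const)
  have htrc : Continuous (fun P : Matrix (Fin n) (Fin s) ℝ => Pᵀ) :=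
    LinearMap.continuous_of_finiteDimensional
      ({ toFun := fun P => Pᵀ
         map_add' := fun P Q => Matrix.transpose_add P Q
         map_smul' := fun c P => Matrix.transpose_smul c P } :
        Matrix (Fin n) (Fin s) ℝ →ₗ[ℝ] Matrix (Fin s) (Fin n) ℝ)
  have hF1c : Continuous fun τ => Z τ * (Z τ)ᵀ :=
    (l2_mul_isBoundedBilinear (a := n) (b := s) (c := n)).continuous.comp
      (hZc.prodMk (htrc.comp hZc))
  have hF2c : Continuous fun τ => Zm τ * (Zm τ)ᵀ :=
    (l2_mul_isBoundedBilinear (a := n) (b := s) (c := n)).continuous.comp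
      (hZmc.prodMk (htrc.comp hZmc))
  have hint1 : IntervalIntegrable (fun τ => Z τ * (Z τ)ᵀ) MeasureTheory.volume t₀ t :=
    hF1c.intervalIntegrable _ _
  have hint2 : IntervalIntegrable (fun τ => Zm τ * (Zm τ)ᵀ) MeasureTheory.volume t₀ t :=
    hF2c.intervalIntegrable _ _
  have hXsub : X t - Xm t = ∫ τ in t₀..t, (Z τ * (Z τ)ᵀ - Zm τ * (Zm τ)ᵀ) := by
    rw [hX t, hXm t, intervalIntegral.integral_sub hint1 hint2]
  -- pointwise bound
  have hpt : ∀ τ ∈ Icc t₀ t, ‖Z τ * (Z τ)ᵀ - Zm τ * (Zm τ)ᵀ‖ ≤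
      Real.exp (t * μ) * (‖B‖ + ‖Bm‖) * (Real.exp (-τ * μ) * ‖Z τ - Zm τ‖) := by
    rintro τ ⟨hτ1, hτ2⟩
    have hττ : (0:ℝ) ≤ t - τ := by linarith
    have hA1 : ‖NormedSpace.exp ((t - τ) • A)‖ ≤ Real.exp ((t - τ) * μ) :=
      exp_l2_opNorm_le A hττ
    have hT1 : ‖NormedSpace.exp ((t - τ) • T)‖ ≤ Real.exp ((t - τ) * μ) := by
      refine (exp_l2_opNorm_le T hττ).trans (Real.exp_le_exp.mpr ?_)
      have := mu2_conj_le A V hV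
      rw [← hT] at this
      exact mul_le_mul_of_nonneg_left this hττ
    have hZb : ‖Z τ‖ ≤ Real.exp ((t - τ) * μ) * ‖B‖ :=
      (Matrix.l2_opNorm_mul _ B).trans (mul_le_mul_of_nonneg_right hA1 (norm_nonneg B))
    have hZmb : ‖Zm τ‖ ≤ Real.exp ((t - τ) * μ) * ‖Bm‖ := by
      have h1 : Zm τ = V * (NormedSpace.exp ((t - τ) • T) * Bm) := by
        rw [← hZmeq τ, Matrix.mul_assoc]
      rw [h1, l2_opNorm_V_mul V hV]
      exact (Matrix.l2_opNorm_mul _ Bm).trans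
        (mul_le_mul_of_nonneg_right hT1 (norm_nonneg Bm))
    have hid : Z τ * (Z τ)ᵀ - Zm τ * (Zm τ)ᵀ =
        (Z τ - Zm τ) * (Z τ)ᵀ + Zm τ * (Z τ - Zm τ)ᵀ := by
      rw [Matrix.sub_mul, Matrix.transpose_sub, Matrix.mul_sub]
      abel
    have hD : (0:ℝ) ≤ ‖Z τ - Zm τ‖ := norm_nonneg _
    have hstep : ‖Z τ * (Z τ)ᵀ - Zm τ * (Zm τ)ᵀ‖ ≤
        ‖Z τ - Zm τ‖ * (Real.exp ((t - τ) * μ) * ‖B‖) +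
        (Real.exp ((t - τ) * μ) * ‖Bm‖) * ‖Z τ - Zm τ‖ := by
      rw [hid]
      refine (norm_add_le _ _).trans (add_le_add ?_ ?_)
      · refine (Matrix.l2_opNorm_mul _ _).trans ?_
        rw [l2_opNorm_transpose]
        exact mul_le_mul (le_refl _) hZb (norm_nonneg _) hD
      · refine (Matrix.l2_opNorm_mul _ _).trans ?_
        rw [l2_opNorm_transpose]
        exact mul_le_mul hZmb (le_refl _) hD (by positivity)
    have hEfact : Real.exp ((t - τ) * μ) = Real.exp (t * μ) * Real.exp (-τ * μ) := by
      rw [← Real.exp_add]; ring_nf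
    refine hstep.trans (le_of_eq ?_)
    rw [hEfact]; ring
  -- integrability of the comparison functions
  have hGc : Continuous fun τ =>
      Real.exp (t * μ) * (‖B‖ + ‖Bm‖) * (Real.exp (-τ * μ) * ‖Z τ - Zm τ‖) := by
    refine continuous_const.mul ?_
    exact (Real.continuous_exp.comp ((continuous_id.neg).mul continuous_const)).mul
      (hZc.sub hZmc).norm
  calc ‖X t - Xm t‖ = ‖∫ τ in t₀..t, (Z τ * (Z τ)ᵀ - Zm τ * (Zm τ)ᵀ)‖ := by rw [hXsub]
    _ ≤ ∫ τ in t₀..t, ‖Z τ * (Z τ)ᵀ - Zm τ * (Zm τ)ᵀ‖ :=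
        intervalIntegral.norm_integral_le_integral_norm ht0
    _ ≤ ∫ τ in t₀..t,
          Real.exp (t * μ) * (‖B‖ + ‖Bm‖) * (Real.exp (-τ * μ) * ‖Z τ - Zm τ‖) :=
        intervalIntegral.integral_mono_on ht0
          ((hF1c.sub hF2c).norm.intervalIntegrable _ _)
          (hGc.intervalIntegrable _ _) hpt
    _ = Real.exp (t * μ) * (‖B‖ + ‖Bm‖) *
          ∫ τ in t₀..t, Real.exp (-τ * μ) * ‖Z τ - Zm τ‖ :=
        intervalIntegral.integral_const_mul _ _
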